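/- Every Penrose model set Λ_P ⊂ ℝ² is aperiodic: if t ∈ ℝ² satisfies t + Λ_P = Λ_P, then t = 0. -/

import Mathlib

open scoped Pointwise

noncomputable section

instance : TopologicalSpace (ZMod 5) := ⊥
instance : DiscreteTopology (ZMod 5) := ⟨rfl⟩

/-- The primitive 5th root of unity ζ₅ = exp(2πi/5). -/
def zeta5 : ℂ := Complex.exp (2 * Real.pi * Complex.I / 5)

/-- The ring of cyclotomic integers ℤ[ζ₅], as the set of ℤ-combinations of 1, ζ₅, ζ₅², ζ₅³. -/
def Zzeta5 : Set ℂ := {z | ∃ a : Fin 4 → ℤ, z = ∑ j : Fin 4, (a j : ℂ) * zeta5 ^ (j : ℕ)}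

/-- The (unique) integer coefficients of an element of ℤ[ζ₅] w.r.t. the basis 1, ζ₅, ζ₅², ζ₅³. -/
def coeffs (z : ℂ) : Fin 4 → ℤ :=
  open Classical in
  if h : z ∈ Zzeta5 then h.choose else 0

/-- The star map z ↦ (σ₂(z), Σ aⱼ(z) mod 5), with σ₂ the Galois automorphism ζ₅ ↦ ζ₅². -/
def starMap (z : ℂ) : ℂ × ZMod 5 :=
  (∑ j : Fin 4, (coeffs z j : ℂ) * zeta5 ^ (2 * (j : ℕ)),
   ∑ j : Fin 4, ((coeffs z j : ℤ) : ZMod 5))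

/-- The regular pentagon P: the convex hull of the 5th roots of unity. -/
def pent : Set ℂ := convexHull ℝ {z : ℂ | z ^ 5 = 1}

/-- The golden ratio τ = (1+√5)/2. -/
def tauR : ℝ := (1 + Real.sqrt 5) / 2

/-- The Penrose window W_P ⊂ ℝ² × ℤ/5ℤ. -/
def WP : Set (ℂ × ZMod 5) :=
  (pent ×ˢ ({1} : Set (ZMod 5))) ∪ ((-pent) ×ˢ ({2} : Set (ZMod 5))) ∪
    ((tauR • pent) ×ˢ ({3} : Set (ZMod 5))) ∪ ((-(tauR • pent)) ×ˢ ({4} : Set (ZMod 5)))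

/-- The shifted window W_P^u = (u, 0) + W_P. -/
def WPu (u : ℂ) : Set (ℂ × ZMod 5) := (fun p => ((u, (0 : ZMod 5)) + p)) '' WP

/-- The model set Λ_P^u = {z ∈ ℤ[ζ₅] : z⋆ ∈ W_P^u}. -/
def LambdaPu (u : ℂ) : Set ℂ := {z | z ∈ Zzeta5 ∧ starMap z ∈ WPu u}

/-- Λ_P^u is generic if the boundary of W_P^u contains no point of ℤ[ζ₅]⋆. -/
def IsGeneric (u : ℂ) : Prop := ∀ z ∈ Zzeta5, starMap z ∉ frontier (WPu u)

/-- A Penrose model set: a translate t + Λ_P^u of a generic Λ_P^u. -/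
def IsPMS (Λ : Set ℂ) : Prop := ∃ t u : ℂ, IsGeneric u ∧ Λ = (fun z => t + z) '' LambdaPu u

/-- v is parallel to u. -/
def Par (u v : ℂ) : Prop := ∃ r : ℝ, r ≠ 0 ∧ v = r • u

/-- A ℤ[ζ₅]-direction: a direction parallel to a nonzero element of ℤ[ζ₅]. -/
def IsZ5Direction (u : ℂ) : Prop := ∃ z ∈ Zzeta5, z ≠ 0 ∧ Par u z

/-- The line through p in direction u. -/
def line (u p : ℂ) : Set ℂ := {x | ∃ t : ℝ, x = p + t • u}

/-- The X-ray of F in direction u, as a function of the base point of the line. -/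
def Xray (u : ℂ) (F : Set ℂ) : ℂ → ℕ := fun p => (F ∩ line u p).ncard

/-- A convex subset C of Λ: a finite subset with C = conv(C) ∩ Λ. -/
def IsConvexSubset (Λ C : Set ℂ) : Prop :=
  C.Finite ∧ C ⊆ Λ ∧ C = convexHull ℝ C ∩ Λ

lemma zeta5_prim : IsPrimitiveRoot zeta5 5 := by
  have := Complex.isPrimitiveRoot_exp 5 (by norm_num)
  simpa [zeta5] using this

lemma zeta5_pow5 : zeta5 ^ 5 = 1 := zeta5_prim.pow_eq_one

lemma zeta5_ne_one : zeta5 ≠ 1 := by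
  intro h
  have := zeta5_prim.pow_ne_one_of_pos_of_lt (l := 1) one_ne_zero (by norm_num)
  simp [h] at this

lemma zeta5_sum : 1 + zeta5 + zeta5^2 + zeta5^3 + zeta5^4 = 0 := by
  have h2 : (zeta5 - 1) * (1 + zeta5 + zeta5^2 + zeta5^3 + zeta5^4) = 0 := by
    linear_combination zeta5_pow5
  rcases mul_eq_zero.1 h2 with h | h
  · exact absurd (sub_eq_zero.1 h) zeta5_ne_one
  · exact h

lemma zeta5_re : zeta5.re = Real.cos (2 * Real.pi / 5) := by
  have : zeta5 = Complex.exp (Complex.I * (2 * Real.pi / 5)) := by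
    unfold zeta5; ring_nf
  rw [this, Complex.exp_re]
  simp

lemma zeta5_im : zeta5.im = Real.sin (2 * Real.pi / 5) := by
  have : zeta5 = Complex.exp (Complex.I * (2 * Real.pi / 5)) := by
    unfold zeta5; ring_nf
  rw [this, Complex.exp_im]
  simp

open Polynomial in
lemma indep_rat (a₀ a₁ a₂ a₃ : ℚ)
    (h : (a₀:ℂ) + a₁ * zeta5 + a₂ * zeta5^2 + a₃ * zeta5^3 = 0) :
    a₀ = 0 ∧ a₁ = 0 ∧ a₂ = 0 ∧ a₃ = 0 := by
  set p : ℚ[X] := C a₃ * X^3 + C a₂ * X^2 + C a₁ * X + C a₀ with hp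
  have hroot : aeval zeta5 p = 0 := by
    simp only [hp, map_add, map_mul, map_pow, aeval_C, aeval_X]
    simp only [eq_ratCast]
    rw [← h]; ring
  have hminpoly : (minpoly ℚ zeta5).degree = 4 := by
    rw [← Polynomial.cyclotomic_eq_minpoly_rat zeta5_prim (by norm_num)]
    rw [Polynomial.degree_eq_natDegree (Polynomial.cyclotomic_ne_zero 5 ℚ)]
    rw [Polynomial.natDegree_cyclotomic]
    norm_num [Nat.totient_prime (by norm_num : Nat.Prime 5)]
  have hp0 : p = 0 := by
    by_contra hne
    have hle := minpoly.degree_le_of_ne_zero ℚ zeta5 hne hroot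
    have : p.degree ≤ 3 := Polynomial.degree_cubic_le
    rw [hminpoly] at hle
    exact absurd (le_trans hle this) (by norm_num)
  refine ⟨?_, ?_, ?_, ?_⟩
  · have := congrArg (fun q => Polynomial.coeff q 0) hp0
    simpa [hp] using this
  · have := congrArg (fun q => Polynomial.coeff q 1) hp0
    simpa [hp, Polynomial.coeff_C] using this
  · have := congrArg (fun q => Polynomial.coeff q 2) hp0
    simpa [hp, Polynomial.coeff_C, Polynomial.coeff_X_pow] using this
  · have := congrArg (fun q => Polynomial.coeff q 3) hp0
    simpa [hp, Polynomial.coeff_C, Polynomial.coeff_X_pow] using this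

lemma indep_int (a₀ a₁ a₂ a₃ : ℤ)
    (h : (a₀:ℂ) + a₁ * zeta5 + a₂ * zeta5^2 + a₃ * zeta5^3 = 0) :
    a₀ = 0 ∧ a₁ = 0 ∧ a₂ = 0 ∧ a₃ = 0 := by
  have := indep_rat a₀ a₁ a₂ a₃ (by push_cast; push_cast at h; exact h)
  exact_mod_cast this

lemma fv0 : ((0:Fin 4):ℕ) = 0 := rfl
lemma fv1 : ((1:Fin 4):ℕ) = 1 := rfl
lemma fv2 : ((2:Fin 4):ℕ) = 2 := rfl
lemma fv3 : ((3:Fin 4):ℕ) = 3 := rfl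

lemma sum_expand (a : Fin 4 → ℤ) :
    ∑ j : Fin 4, (a j : ℂ) * zeta5 ^ (j:ℕ)
      = (a 0 : ℂ) + (a 1) * zeta5 + (a 2) * zeta5^2 + (a 3) * zeta5^3 := by
  rw [Fin.sum_univ_four, fv0, fv1, fv2, fv3]
  ring

lemma sum2_expand (a : Fin 4 → ℤ) :
    ∑ j : Fin 4, (a j : ℂ) * zeta5 ^ (2 * (j:ℕ))
      = (a 0 : ℂ) + (a 1) * zeta5^2 + (a 2) * zeta5^4 + (a 3) * zeta5^6 := by
  rw [Fin.sum_univ_four, fv0, fv1, fv2, fv3]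
  norm_num

lemma indep_fun (a : Fin 4 → ℤ) (h : ∑ j : Fin 4, (a j : ℂ) * zeta5 ^ (j:ℕ) = 0) :
    a = 0 := by
  rw [sum_expand] at h
  have := indep_int (a 0) (a 1) (a 2) (a 3) h
  funext j
  fin_cases j <;> simp [this.1, this.2.1, this.2.2.1, this.2.2.2]

lemma coeffs_spec {z : ℂ} (hz : z ∈ Zzeta5) :
    z = ∑ j : Fin 4, (coeffs z j : ℂ) * zeta5 ^ (j:ℕ) := by
  rw [coeffs, dif_pos hz]
  exact hz.choose_spec

lemma coeffs_unique {z : ℂ} (a : Fin 4 → ℤ)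
    (h : z = ∑ j : Fin 4, (a j : ℂ) * zeta5 ^ (j:ℕ)) : coeffs z = a := by
  have hz : z ∈ Zzeta5 := ⟨a, h⟩
  have h2 := coeffs_spec hz
  have h3 : ∑ j : Fin 4, ((coeffs z - a) j : ℂ) * zeta5 ^ (j:ℕ) = 0 := by
    rw [sum_expand]
    rw [sum_expand] at h2 h
    simp only [Pi.sub_apply]
    push_cast
    linear_combination h - h2
  have := indep_fun _ h3
  funext j
  have := congrFun this j
  simpa [sub_eq_zero] using this

lemma coeffs_explicit (a : Fin 4 → ℤ) :
    coeffs (∑ j : Fin 4, (a j : ℂ) * zeta5 ^ (j:ℕ)) = a := coeffs_unique a rfl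

lemma Zzeta5_explicit (a : Fin 4 → ℤ) :
    ∑ j : Fin 4, (a j : ℂ) * zeta5 ^ (j:ℕ) ∈ Zzeta5 := ⟨a, rfl⟩

lemma Zzeta5_add {z w : ℂ} (hz : z ∈ Zzeta5) (hw : w ∈ Zzeta5) : z + w ∈ Zzeta5 := by
  refine ⟨coeffs z + coeffs w, ?_⟩
  rw [sum_expand]
  nth_rewrite 1 [coeffs_spec hz, coeffs_spec hw]
  rw [sum_expand, sum_expand]
  simp only [Pi.add_apply]
  push_cast
  ring

lemma Zzeta5_sub {z w : ℂ} (hz : z ∈ Zzeta5) (hw : w ∈ Zzeta5) : z - w ∈ Zzeta5 := by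
  refine ⟨coeffs z - coeffs w, ?_⟩
  rw [sum_expand]
  nth_rewrite 1 [coeffs_spec hz, coeffs_spec hw]
  rw [sum_expand, sum_expand]
  simp only [Pi.sub_apply]
  push_cast
  ring

lemma coeffs_add {z w : ℂ} (hz : z ∈ Zzeta5) (hw : w ∈ Zzeta5) :
    coeffs (z + w) = coeffs z + coeffs w := by
  apply coeffs_unique
  rw [sum_expand]
  nth_rewrite 1 [coeffs_spec hz, coeffs_spec hw]
  rw [sum_expand, sum_expand]
  simp only [Pi.add_apply]
  push_cast
  ring

lemma starMap_add {z w : ℂ} (hz : z ∈ Zzeta5) (hw : w ∈ Zzeta5) :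
    starMap (z + w) = starMap z + starMap w := by
  simp only [starMap, coeffs_add hz hw, Prod.mk_add_mk, Prod.mk.injEq]
  constructor
  · rw [sum2_expand, sum2_expand, sum2_expand]
    simp only [Pi.add_apply]; push_cast; ring
  · rw [← Finset.sum_add_distrib]
    apply Finset.sum_congr rfl
    intro j _
    simp [Pi.add_apply]

lemma sigma2_inj {z : ℂ} (hz : z ∈ Zzeta5)
    (h : (starMap z).1 = 0) : z = 0 := by
  simp only [starMap] at h
  rw [sum2_expand] at h
  set c := coeffs z with hc
  have key : ((c 0 - c 2 : ℤ) : ℂ) + ((c 3 - c 2 : ℤ)) * zeta5 + ((c 1 - c 2 : ℤ)) * zeta5^2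
      + ((-(c 2) : ℤ)) * zeta5^3 = 0 := by
    push_cast
    linear_combination h - (c 2 : ℂ) * zeta5_sum - (c 3 : ℂ) * zeta5 * zeta5_pow5
  obtain ⟨h0, h1, h2, h3⟩ := indep_int _ _ _ _ key
  have hc2 : c 2 = 0 := by omega
  rw [coeffs_spec hz, sum_expand, ← hc]
  have hc0 : c 0 = 0 := by omega
  have hc1 : c 1 = 0 := by omega
  have hc3 : c 3 = 0 := by omega
  rw [hc0, hc1, hc2, hc3]
  norm_num

def alphaR : ℝ := 2 * Real.cos (2 * Real.pi / 5)

lemma zeta5_ne_zero : zeta5 ≠ 0 := by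
  intro h
  have := zeta5_pow5
  rw [h] at this
  norm_num at this

lemma zeta5_norm : Complex.normSq zeta5 = 1 := by
  have h : (Complex.normSq zeta5 : ℝ) ^ 5 = 1 := by
    have := congrArg Complex.normSq zeta5_pow5
    rw [map_pow] at this
    simpa using this
  have h0 : (0:ℝ) ≤ Complex.normSq zeta5 := Complex.normSq_nonneg _
  rcases lt_trichotomy (Complex.normSq zeta5) 1 with hlt | heq | hgt
  · have := pow_lt_one₀ h0 hlt (by norm_num : (5:ℕ) ≠ 0)
    linarith
  · exact heq
  · have := one_lt_pow₀ hgt (by norm_num : (5:ℕ) ≠ 0)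
    linarith

lemma zeta5_conj : (starRingEnd ℂ) zeta5 = zeta5 ^ 4 := by
  have h1 : zeta5 * (starRingEnd ℂ) zeta5 = 1 := by
    rw [Complex.mul_conj, zeta5_norm]
    norm_num
  have h2 : zeta5 * zeta5 ^ 4 = 1 := by
    rw [← pow_succ']
    exact zeta5_pow5
  have := h1.trans h2.symm
  exact mul_left_cancel₀ zeta5_ne_zero this

lemma alphaC : ((alphaR : ℝ) : ℂ) = zeta5 + zeta5 ^ 4 := by
  have h := Complex.add_conj zeta5
  rw [zeta5_conj] at h
  rw [h]
  norm_cast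
  unfold alphaR
  rw [zeta5_re]

lemma alphaR_sq : alphaR ^ 2 = 1 - alphaR := by
  have : ((alphaR : ℝ) : ℂ) ^ 2 = 1 - ((alphaR : ℝ) : ℂ) := by
    rw [alphaC]
    linear_combination (2 + zeta5^3) * zeta5_pow5 + zeta5_sum
  exact_mod_cast this

lemma alphaR_pos : 0 < alphaR := by
  unfold alphaR
  have : 0 < Real.cos (2 * Real.pi / 5) := by
    apply Real.cos_pos_of_mem_Ioo
    constructor
    · have := Real.pi_pos; linarith
    · have := Real.pi_pos; linarith
  linarith

lemma alphaR_lt_one : alphaR < 1 := by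
  unfold alphaR
  have h : Real.cos (2 * Real.pi / 5) < Real.cos (Real.pi / 3) := by
    apply Real.cos_lt_cos_of_nonneg_of_le_pi
    · positivity
    · have := Real.pi_pos; linarith
    · have := Real.pi_pos; linarith
  rw [Real.cos_pi_div_three] at h
  linarith

def Aset : AddSubgroup ℝ where
  carrier := {x : ℝ | ∃ m n : ℤ, x = m + n * alphaR}
  zero_mem' := ⟨0, 0, by norm_num⟩
  add_mem' := by
    rintro x y ⟨m, n, rfl⟩ ⟨p, q, rfl⟩
    exact ⟨m + p, n + q, by push_cast; ring⟩
  neg_mem' := by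
    rintro x ⟨m, n, rfl⟩
    exact ⟨-m, -n, by push_cast; ring⟩

lemma pow_mem_Aset (k : ℕ) : alphaR ^ k ∈ Aset := by
  induction k using Nat.strong_induction_on with
  | _ k ih =>
    match k with
    | 0 => exact ⟨1, 0, by norm_num⟩
    | 1 => exact ⟨0, 1, by norm_num⟩
    | (n+2) =>
      have h1 : alphaR ^ (n+2) = alphaR ^ n - alphaR ^ (n+1) := by
        have := alphaR_sq
        calc alphaR ^ (n+2) = alphaR^n * alphaR^2 := by ring
          _ = alphaR^n * (1 - alphaR) := by rw [this]
          _ = alphaR ^ n - alphaR ^ (n+1) := by ring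
      rw [h1]
      exact sub_mem (ih n (by omega)) (ih (n+1) (by omega))

lemma Aset_dense : Dense (Aset : Set ℝ) := by
  apply AddSubgroup.dense_of_not_isolated_zero
  intro ε hε
  obtain ⟨k, hk⟩ := exists_pow_lt_of_lt_one hε alphaR_lt_one
  exact ⟨alphaR ^ k, pow_mem_Aset k, pow_pos alphaR_pos k, hk⟩

lemma zeta5_im_pos : 0 < zeta5.im := by
  rw [zeta5_im]
  apply Real.sin_pos_of_pos_of_lt_pi
  · positivity
  · have := Real.pi_pos; linarith

def gmap : (ℝ × ℝ) ≃ₜ ℂ where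
  toFun p := (1 + 5 * p.1 : ℝ) + (5 * p.2 : ℝ) * zeta5
  invFun w := (((w - 1).re - ((w - 1).im / zeta5.im) * zeta5.re) / 5, (w - 1).im / zeta5.im / 5)
  left_inv := by
    rintro ⟨x, y⟩
    have him := zeta5_im_pos.ne'
    simp only [Complex.add_re, Complex.add_im, Complex.sub_re, Complex.sub_im,
      Complex.ofReal_re, Complex.ofReal_im, Complex.mul_re, Complex.mul_im,
      Complex.one_re, Complex.one_im]
    refine Prod.ext ?_ ?_ <;> simp <;> field_simp <;> ring
  right_inv := by
    intro w
    have him := zeta5_im_pos.ne'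
    apply Complex.ext
    · simp only [Complex.add_re, Complex.sub_re, Complex.ofReal_re, Complex.mul_re,
        Complex.ofReal_im, Complex.one_re]
      field_simp
      ring
      done
    · simp only [Complex.add_im, Complex.sub_im, Complex.ofReal_im, Complex.mul_im,
        Complex.ofReal_re, Complex.one_im]
      field_simp
      ring
  continuous_toFun := by fun_prop
  continuous_invFun := by fun_prop

lemma zeta5_re_lt_one : zeta5.re < 1 := by
  rw [zeta5_re]
  have := alphaR_lt_one
  unfold alphaR at this
  linarith

lemma Aset_mem {x : ℝ} (h : x ∈ Aset) : ∃ m n : ℤ, x = m + n * alphaR := h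

lemma gmap_apply (p : ℝ × ℝ) : gmap p = ((1 + 5 * p.1 : ℝ) : ℂ) + ((5 * p.2 : ℝ) : ℂ) * zeta5 := rfl

lemma roots_span : affineSpan ℝ {z : ℂ | z ^ 5 = 1} = ⊤ := by
  have h1 : (1:ℂ) ∈ {z : ℂ | z ^ 5 = 1} := by simp
  rw [AffineSubspace.affineSpan_eq_top_iff_vectorSpan_eq_top_of_nonempty ℝ ℂ ℂ ⟨1, h1⟩]
  have hz : zeta5 ∈ {z : ℂ | z ^ 5 = 1} := zeta5_pow5
  have hz4 : zeta5 ^ 4 ∈ {z : ℂ | z ^ 5 = 1} := by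
    simp only [Set.mem_setOf_eq, ← pow_mul]
    rw [show 4 * 5 = 5 * 4 from rfl, pow_mul, zeta5_pow5, one_pow]
  have hv1 : zeta5 - 1 ∈ vectorSpan ℝ {z : ℂ | z ^ 5 = 1} :=
    vsub_mem_vectorSpan ℝ hz h1
  have hv2 : zeta5 ^ 4 - 1 ∈ vectorSpan ℝ {z : ℂ | z ^ 5 = 1} :=
    vsub_mem_vectorSpan ℝ hz4 h1
  rw [eq_top_iff]
  intro w _
  set c : ℝ := zeta5.re - 1 with hc
  set d : ℝ := zeta5.im with hd
  have hcn : c ≠ 0 := by have := zeta5_re_lt_one; simp [hc]; linarith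
  have hdn : d ≠ 0 := zeta5_im_pos.ne'
  have hre4 : (zeta5 ^ 4).re = zeta5.re := by rw [← zeta5_conj, Complex.conj_re]
  have him4 : (zeta5 ^ 4).im = -zeta5.im := by rw [← zeta5_conj, Complex.conj_im]
  set a : ℝ := (w.re / c + w.im / d) / 2
  set b : ℝ := (w.re / c - w.im / d) / 2
  have key : w = a • (zeta5 - 1) + b • (zeta5 ^ 4 - 1) := by
    apply Complex.ext
    · simp only [Complex.add_re, Complex.real_smul, Complex.mul_re, Complex.ofReal_re,
        Complex.ofReal_im, Complex.sub_re, Complex.sub_im, Complex.one_re, Complex.one_im,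
        hre4, him4]
      have h9 : (-1 + zeta5.re) * (-1 + zeta5.re)⁻¹ = 1 :=
        mul_inv_cancel₀ (by simpa [hc, add_comm, sub_eq_add_neg] using hcn)
      field_simp
      linear_combination (-w.re) * h9
    · simp only [Complex.add_im, Complex.real_smul, Complex.mul_im, Complex.ofReal_re,
        Complex.ofReal_im, Complex.sub_re, Complex.sub_im, Complex.one_re, Complex.one_im,
        hre4, him4]
      have h10 : d * d⁻¹ = 1 := mul_inv_cancel₀ hdn
      field_simp
      linear_combination (-w.im) * h10
  rw [key]
  exact Submodule.add_mem _ (Submodule.smul_mem _ _ hv1) (Submodule.smul_mem _ _ hv2)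

lemma pent_interior_nonempty : (interior pent).Nonempty := by
  unfold pent
  rw [(convex_convexHull ℝ _).interior_nonempty_iff_affineSpan_eq_top]
  rw [affineSpan_convexHull]
  exact roots_span

lemma tauR_ge_one : (1:ℝ) ≤ tauR := by
  have : (1:ℝ) ≤ Real.sqrt 5 := by
    rw [show (5:ℝ) = 5 from rfl]
    nlinarith [Real.sq_sqrt (by norm_num : (5:ℝ) ≥ 0), Real.sqrt_nonneg 5]
  unfold tauR; linarith

lemma pent_bound {x : ℂ} (hx : x ∈ pent) : ‖x‖ ≤ 1 := by
  have : pent ⊆ Metric.closedBall 0 1 := by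
    apply convexHull_min _ (convex_closedBall _ _)
    intro z hz
    simp only [Set.mem_setOf_eq] at hz
    have h5 : ‖z‖ ^ 5 = 1 := by
      rw [← norm_pow, hz, norm_one]
    have h0 : (0:ℝ) ≤ ‖z‖ := norm_nonneg z
    simp only [Metric.mem_closedBall, dist_zero_right]
    by_contra hgt
    push_neg at hgt
    have := one_lt_pow₀ hgt (by norm_num : (5:ℕ) ≠ 0)
    linarith
  simpa using this hx

lemma WP_bound {p : ℂ × ZMod 5} (hp : p ∈ WP) : ‖p.1‖ ≤ tauR := by
  have ht0 : (0:ℝ) ≤ tauR := le_trans zero_le_one tauR_ge_one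
  rcases hp with ((h | h) | h) | h
  · exact le_trans (pent_bound h.1) tauR_ge_one
  · have := pent_bound (Set.mem_neg.mp h.1)
    rw [norm_neg] at this
    exact le_trans this tauR_ge_one
  · obtain ⟨y, hy, hxy⟩ := h.1
    rw [← hxy, norm_smul]
    have := pent_bound hy
    simp only [Real.norm_eq_abs, abs_of_nonneg ht0]
    nlinarith
  · have h' := Set.mem_neg.mp h.1
    obtain ⟨y, hy, hxy⟩ := h'
    have hxy' : tauR • y = -p.1 := hxy
    have : p.1 = -(tauR • y) := by rw [hxy', neg_neg]
    rw [this, norm_neg, norm_smul]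
    have := pent_bound hy
    simp only [Real.norm_eq_abs, abs_of_nonneg ht0]
    nlinarith

lemma WPu_bound {u : ℂ} {q : ℂ × ZMod 5} (hq : q ∈ WPu u) : ‖q.1‖ ≤ ‖u‖ + tauR := by
  obtain ⟨p, hp, rfl⟩ := hq
  calc ‖(u + p.1 : ℂ)‖ ≤ ‖u‖ + ‖p.1‖ := norm_add_le _ _
    _ ≤ ‖u‖ + tauR := by linarith [WP_bound hp]

lemma LambdaPu_nonempty (u : ℂ) : (LambdaPu u).Nonempty := by
  -- the open target set
  set O : Set ℂ := (fun w => u + w) '' interior pent with hO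
  have hOopen : IsOpen O := (Homeomorph.addLeft u).isOpenMap _ isOpen_interior
  have hOne : O.Nonempty := pent_interior_nonempty.image _
  -- dense set meets it
  have hdense : Dense (gmap '' ((Aset : Set ℝ) ×ˢ (Aset : Set ℝ))) :=
    (gmap.surjective.denseRange).dense_image gmap.continuous (Aset_dense.prod Aset_dense)
  obtain ⟨e, hegm, heO⟩ := hdense.exists_mem_open hOopen hOne
  obtain ⟨⟨x, y⟩, ⟨hxA, hyA⟩, rfl⟩ := hegm
  obtain ⟨m, n, rfl⟩ := Aset_mem hxA
  obtain ⟨p, q, rfl⟩ := Aset_mem hyA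
  -- the candidate lattice point
  set a : Fin 4 → ℤ := ![1 + 5*m + 5*q, 5*q, 5*n, 5*p + 5*n] with ha
  refine ⟨∑ j : Fin 4, (a j : ℂ) * zeta5 ^ (j:ℕ), Zzeta5_explicit a, ?_⟩
  -- compute starMap
  have hc : coeffs (∑ j : Fin 4, (a j : ℂ) * zeta5 ^ (j:ℕ)) = a := coeffs_explicit a
  have hfst : (starMap (∑ j : Fin 4, (a j : ℂ) * zeta5 ^ (j:ℕ))).1
      = gmap (↑m + ↑n * alphaR, ↑p + ↑q * alphaR) := by
    show (∑ j : Fin 4, ((coeffs _ j : ℤ) : ℂ) * zeta5 ^ (2 * (j:ℕ))) = _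
    rw [hc, sum2_expand, gmap_apply]
    have h4 := alphaC
    simp only [ha]
    push_cast
    linear_combination (-5*(q:ℂ) + (5*(p:ℂ) + 5*(n:ℂ))*zeta5) * zeta5_pow5
      + (-5*(n:ℂ) - 5*(q:ℂ)*zeta5) * h4
  have hsnd : (starMap (∑ j : Fin 4, (a j : ℂ) * zeta5 ^ (j:ℕ))).2 = (1 : ZMod 5) := by
    show (∑ j : Fin 4, ((coeffs _ j : ℤ) : ZMod 5)) = _
    rw [hc]
    rw [Fin.sum_univ_four]
    simp only [ha, Matrix.cons_val_zero, Matrix.cons_val_one, Matrix.head_cons,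
      Matrix.cons_val_two, Matrix.tail_cons, Matrix.cons_val_three]
    push_cast
    have h5 : ((5:ℤ) : ZMod 5) = 0 := by decide
    push_cast at h5 ⊢
    rw [h5]  -- may fail; fallback
    ring
  -- membership in WPu u
  obtain ⟨w, hw, hwe⟩ : gmap (↑m + ↑n * alphaR, ↑p + ↑q * alphaR) ∈ O := heO
  refine ⟨(w, (1 : ZMod 5)), ?_, ?_⟩
  · left; left; left
    exact ⟨interior_subset hw, rfl⟩
  · apply Prod.ext
    · show u + w = _
      rw [hfst, ← hwe]
    · show (0 : ZMod 5) + 1 = _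
      rw [hsnd]
      norm_num

theorem pms_aperiodic (Λ : Set ℂ) (hΛ : IsPMS Λ) (t : ℂ)
    (h : (fun z => t + z) '' Λ = Λ) : t = 0 := by
  obtain ⟨t₀, u, hgen, rfl⟩ := hΛ
  -- translation invariance of LambdaPu u
  have hstep : ∀ z ∈ LambdaPu u, t + z ∈ LambdaPu u := by
    intro z hz
    have h1 : t + (t₀ + z) ∈ (fun z => t₀ + z) '' LambdaPu u := by
      rw [← h]
      exact ⟨t₀ + z, ⟨z, hz, rfl⟩, rfl⟩
    obtain ⟨w, hw, hww⟩ := h1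
    have : w = t + z := by
      have : t₀ + w = t + (t₀ + z) := hww
      linear_combination this
    rw [← this]; exact hw
  obtain ⟨z₀, hz₀⟩ := LambdaPu_nonempty u
  have htZ : t ∈ Zzeta5 := by
    have h1 : t + z₀ ∈ LambdaPu u := hstep z₀ hz₀
    have := Zzeta5_sub h1.1 hz₀.1
    simpa using this
  -- iterate
  have hiter : ∀ n : ℕ, z₀ + n • t ∈ LambdaPu u := by
    intro n
    induction n with
    | zero => simpa using hz₀
    | succ n ih =>
      have := hstep _ ih
      have he : t + (z₀ + n • t) = z₀ + (n+1) • t := by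
        simp only [nsmul_eq_mul]
        push_cast
        ring
      rwa [he] at this
  have hsm : ∀ n : ℕ, (starMap (z₀ + n • t)).1 = (starMap z₀).1 + n • (starMap t).1 := by
    intro n
    induction n with
    | zero => simp
    | succ n ih =>
      have hmem : z₀ + n • t ∈ Zzeta5 := (hiter n).1
      have he : z₀ + (n+1) • t = (z₀ + n • t) + t := by
        simp only [nsmul_eq_mul]
        push_cast
        ring
      rw [he, starMap_add hmem htZ, Prod.fst_add, ih, add_smul]
      ring
  -- boundedness forces (starMap t).1 = 0
  have hbd : ∀ n : ℕ, ‖(starMap z₀).1 + n • (starMap t).1‖ ≤ ‖u‖ + tauR := by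
    intro n
    rw [← hsm n]
    exact WPu_bound (hiter n).2
  have hzero : (starMap t).1 = 0 := by
    by_contra hne
    have hpos : 0 < ‖(starMap t).1‖ := norm_pos_iff.mpr hne
    obtain ⟨n, hn⟩ := exists_nat_gt ((‖u‖ + tauR + ‖(starMap z₀).1‖) / ‖(starMap t).1‖)
    have h1 := hbd n
    set A := (starMap z₀).1 with hA
    set B := (starMap t).1 with hB
    have hns : (n • B : ℂ) = (n:ℂ) * B := nsmul_eq_mul _ _
    have h4 : ‖(n:ℂ)*B‖ ≤ ‖A + (n:ℂ)*B‖ + ‖A‖ := by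
      have := norm_sub_le (A + (n:ℂ)*B) A
      simpa using this
    have h5 : ‖(n:ℂ)*B‖ = (n:ℝ) * ‖B‖ := by
      rw [norm_mul, Complex.norm_natCast]
    rw [hns] at h1
    rw [div_lt_iff₀ hpos] at hn
    rw [h5] at h4
    linarith
  exact sigma2_inj htZ hzero

end
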